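/- For all real x with 0 < x < π, ((π² − x²)/(π² + x²))^(π²/12) ≥ sin(x)/x; that is, sin(x)/x is bounded above by that power of the Redheffer ratio. -/

import Mathlib

open Real Filter Finset Topology

private lemma pi_sq_lt_twelve : π ^ 2 < 12 := by
  nlinarith [Real.pi_lt_d2, Real.pi_pos]

/-- The key one-variable inequality. -/
private lemma aux_star (s : ℝ) (h0 : 0 ≤ s) (h1 : s < 1) :
    Real.log (1 - s) - (π ^ 2 / 6 - 1) * s ≤ π ^ 2 / 12 * Real.log ((1 - s) / (1 + s)) := by
  rcases h0.eq_or_lt with rfl | h0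
  · norm_num
  set F : ℝ → ℝ := fun u =>
    π ^ 2 / 12 * (Real.log (1 - u) - Real.log (1 + u)) - Real.log (1 - u) + (π ^ 2 / 6 - 1) * u
    with hF
  have hder : ∀ u ∈ Set.Ioo (0:ℝ) s, HasDerivAt F
      (π ^ 2 / 12 * ((1 - u)⁻¹ * (-1) - (1 + u)⁻¹ * 1) - (1 - u)⁻¹ * (-1)
        + (π ^ 2 / 6 - 1) * 1) u := by
    intro u hu
    have hus : u < 1 := lt_trans hu.2 h1
    have hu1 : (1 : ℝ) - u ≠ 0 := by intro h; rw [sub_eq_zero] at h; exact hus.ne' h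
    have hu2 : (1 : ℝ) + u ≠ 0 := by have := hu.1; positivity
    have d1 : HasDerivAt (fun u : ℝ => Real.log (1 - u)) ((1 - u)⁻¹ * (-1)) u :=
      (Real.hasDerivAt_log hu1).comp u (((hasDerivAt_id u).const_sub 1).congr_deriv rfl)
    have d2 : HasDerivAt (fun u : ℝ => Real.log (1 + u)) ((1 + u)⁻¹ * 1) u :=
      (Real.hasDerivAt_log hu2).comp u ((hasDerivAt_id u).const_add 1)
    exact (((d1.sub d2).const_mul _).sub d1).add ((hasDerivAt_id u).const_mul _)
  have hmono : MonotoneOn F (Set.Icc 0 s) := by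
    have hc1 : ContinuousOn (fun u : ℝ => Real.log (1 - u)) (Set.Icc 0 s) := by
      apply ContinuousOn.log ((continuous_const.sub continuous_id).continuousOn)
      intro u hu
      have h2 : u ≤ s := hu.2
      intro h; simp only [Pi.sub_apply, id_eq, sub_eq_zero] at h; linarith [h.le, h.ge]
    have hc2 : ContinuousOn (fun u : ℝ => Real.log (1 + u)) (Set.Icc 0 s) := by
      apply ContinuousOn.log ((continuous_const.add continuous_id).continuousOn)
      intro u hu
      have : (0:ℝ) ≤ u := hu.1
      simp only [Pi.add_apply, id_eq]
      positivity
    apply monotoneOn_of_deriv_nonneg (convex_Icc 0 s)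
    · exact ((continuousOn_const.mul (hc1.sub hc2)).sub hc1).add
        (continuousOn_const.mul continuousOn_id)
    · intro u hu
      rw [interior_Icc] at hu
      exact (hder u hu).differentiableAt.differentiableWithinAt
    · intro u hu
      rw [interior_Icc] at hu
      rw [(hder u hu).deriv]
      have ha : (0:ℝ) < 1 - u := by have := lt_trans hu.2 h1; linarith
      have hb : (0:ℝ) < 1 + u := by have := hu.1; linarith
      have key2 : π ^ 2 / 12 * ((1 - u)⁻¹ * (-1) - (1 + u)⁻¹ * 1) - (1 - u)⁻¹ * (-1)
          + (π ^ 2 / 6 - 1) * 1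
          = (u - (π ^ 2 / 6 - 1) * u ^ 2) / ((1 - u) * (1 + u)) := by
        field_simp
        ring
      rw [key2]
      apply div_nonneg _ (by positivity)
      have h12 := pi_sq_lt_twelve
      have hu1 : u < 1 := lt_trans hu.2 h1
      nlinarith [hu.1.le, sq_nonneg u, hu.1]
  have hs : F 0 ≤ F s :=
    hmono (Set.left_mem_Icc.mpr h0.le) (Set.right_mem_Icc.mpr h0.le) h0.le
  have hF0 : F 0 = 0 := by simp [hF]
  have hlog : Real.log ((1 - s) / (1 + s)) = Real.log (1 - s) - Real.log (1 + s) := by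
    apply Real.log_div
    · intro h; rw [sub_eq_zero] at h; exact h1.ne' h
    · positivity
  rw [hF0] at hs
  simp only [hF] at hs
  rw [hlog]
  linarith

theorem zhu_sun_upper (x : ℝ) (hx : 0 < x) (hxpi : x < π) :
    Real.sin x / x ≤ ((π ^ 2 - x ^ 2) / (π ^ 2 + x ^ 2)) ^ (π ^ 2 / 12) := by
  have hπ := Real.pi_pos
  set t : ℝ := x / π with ht
  have ht0 : 0 < t := div_pos hx hπ
  have ht1 : t < 1 := (div_lt_one hπ).mpr hxpi
  have hxt : π * t = x := by rw [ht]; field_simp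
  have hts : t ^ 2 < 1 := by nlinarith
  have hsin : 0 < Real.sin x := Real.sin_pos_of_pos_of_lt_pi hx hxpi
  set P : ℕ → ℝ := fun n => ∏ j ∈ Finset.range n, ((1:ℝ) - t ^ 2 / ((j:ℝ) + 1) ^ 2) with hPdef
  have hfac : ∀ j : ℕ, 0 < (1:ℝ) - t ^ 2 / ((j:ℝ) + 1) ^ 2 := by
    intro j
    have h1 : (1:ℝ) ≤ ((j:ℝ) + 1) ^ 2 := by
      nlinarith [Nat.cast_nonneg (α := ℝ) j]
    have h2 : t ^ 2 / ((j:ℝ) + 1) ^ 2 ≤ t ^ 2 := div_le_self (sq_nonneg t) h1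
    linarith
  have hP : Tendsto P atTop (𝓝 (Real.sin x / x)) := by
    have h := Real.tendsto_euler_sin_prod t
    rw [hxt] at h
    have h2 := h.div_const x
    refine h2.congr fun n => ?_
    exact mul_div_cancel_left₀ _ hx.ne'
  have hlogP : Tendsto (fun n => Real.log (P n)) atTop (𝓝 (Real.log (Real.sin x / x))) :=
    hP.log (by positivity)
  have hlogsum : ∀ n, Real.log (P n)
      = ∑ j ∈ Finset.range n, Real.log (1 - t ^ 2 / ((j:ℝ) + 1) ^ 2) := fun n =>
    Real.log_prod (fun j _ => (hfac j).ne')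
  set b : ℕ → ℝ := fun j =>
    -(t ^ 2) * (1 / ((j:ℝ) + 1) ^ 2) + (if j = 0 then Real.log (1 - t ^ 2) + t ^ 2 else 0)
    with hb
  have hb2 : HasSum (fun j : ℕ => 1 / ((j:ℝ) + 1) ^ 2) (π ^ 2 / 6) := by
    have h : HasSum (fun n : ℕ => (1:ℝ) / ((n + 1 : ℕ):ℝ) ^ 2) (π ^ 2 / 6) := by
      rw [hasSum_nat_add_iff (f := fun n : ℕ => (1:ℝ) / (n:ℝ) ^ 2) 1]
      simpa using hasSum_zeta_two
    convert h using 2 with j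
    push_cast
    ring
  have hbsum : HasSum b (Real.log (1 - t ^ 2) - (π ^ 2 / 6 - 1) * t ^ 2) := by
    have h1 := hb2.mul_left (-(t ^ 2))
    have h2 : HasSum (fun j : ℕ => if j = 0 then Real.log (1 - t ^ 2) + t ^ 2 else 0)
        (Real.log (1 - t ^ 2) + t ^ 2) := hasSum_ite_eq 0 _
    have h3 := h1.add h2
    convert h3 using 1
    · rfl
    · ring
  have hgb := hbsum.tendsto_sum_nat
  have hcomp : ∀ n, ∑ j ∈ Finset.range n, Real.log (1 - t ^ 2 / ((j:ℝ) + 1) ^ 2)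
      ≤ ∑ j ∈ Finset.range n, b j := by
    intro n
    apply Finset.sum_le_sum
    intro j _
    rcases eq_or_ne j 0 with rfl | hj
    · simp [hb]
    · have hle := Real.log_le_sub_one_of_pos (hfac j)
      simp only [hb, if_neg hj, add_zero]
      have heq : (1 - t ^ 2 / ((j:ℝ) + 1) ^ 2) - 1 = -(t ^ 2) * (1 / ((j:ℝ) + 1) ^ 2) := by
        ring
      linarith [hle.trans_eq heq]
  have hle1 : Real.log (Real.sin x / x)
      ≤ Real.log (1 - t ^ 2) - (π ^ 2 / 6 - 1) * t ^ 2 :=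
    le_of_tendsto_of_tendsto' (hlogP.congr fun n => hlogsum n) hgb hcomp
  have hstar := aux_star (t ^ 2) (sq_nonneg t) hts
  have hle2 : Real.log (Real.sin x / x)
      ≤ π ^ 2 / 12 * Real.log ((1 - t ^ 2) / (1 + t ^ 2)) := by linarith
  have hr : (1 - t ^ 2) / (1 + t ^ 2) = (π ^ 2 - x ^ 2) / (π ^ 2 + x ^ 2) := by
    have hden1 : (1:ℝ) + t ^ 2 ≠ 0 := by positivity
    have hden2 : π ^ 2 + x ^ 2 ≠ 0 := by positivity
    rw [div_eq_div_iff hden1 hden2, ht]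
    field_simp
    try ring
  rw [hr] at hle2
  have hrpos : 0 < (π ^ 2 - x ^ 2) / (π ^ 2 + x ^ 2) := by
    apply div_pos _ (by positivity)
    nlinarith
  calc Real.sin x / x = Real.exp (Real.log (Real.sin x / x)) :=
        (Real.exp_log (by positivity)).symm
    _ ≤ Real.exp (π ^ 2 / 12 * Real.log ((π ^ 2 - x ^ 2) / (π ^ 2 + x ^ 2))) :=
        Real.exp_le_exp.mpr hle2
    _ = ((π ^ 2 - x ^ 2) / (π ^ 2 + x ^ 2)) ^ (π ^ 2 / 12) := by
        rw [Real.rpow_def_of_pos hrpos, mul_comm]
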